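/- Let n ≥ 3 and let (s_{i_0}, s_{j_0}) be a pair of reflections in D_n generating a dihedral subgroup isomorphic to D_m (m ≥ 3, m dividing n). Then the Hurwitz orbit of (s_{i_0}, s_{j_0}) under the B_2-action consists exactly of the pairs (s_i, s_j) with i ≡ i_0 (mod n/m) and j − i = j_0 − i_0 in ℤ/nℤ. -/

import Mathlib

/-- One elementary braid (Hurwitz) move on a tuple of elements of a group `G`,
encoded as a list: `σᵢ` replaces the adjacent pair `(a, b)` occurring at some
position by `(a * b * a⁻¹, a)`. -/
inductive BraidStep {G : Type*} [Group G] : List G → List G → Prop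
  | head (a b : G) (t : List G) : BraidStep (a :: b :: t) (a * b * a⁻¹ :: a :: t)
  | tail (a : G) {l₁ l₂ : List G} : BraidStep l₁ l₂ → BraidStep (a :: l₁) (a :: l₂)

/-- Hurwitz (braid) equivalence: the equivalence relation generated by
elementary braid moves (so finitely many moves and their inverses). -/
def HurwitzEquiv {G : Type*} [Group G] : List G → List G → Prop :=
  Relation.EqvGen BraidStep

/-- Braid-automorphism equivalence: `v` and `w` differ by a braid move sequence
together with the diagonal action of a group automorphism. -/
def BAEquiv {G : Type*} [Group G] (v w : List G) : Prop :=
  ∃ φ : G ≃* G, HurwitzEquiv (v.map ⇑φ) w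

/-- A `G`-Hurwitz vector (genus 0): all entries nontrivial, the entries
generate `G`, and the product of the entries is `1`. -/
def IsHurwitzVector {G : Type*} [Group G] (v : List G) : Prop :=
  (∀ c ∈ v, c ≠ 1) ∧ Subgroup.closure {g | g ∈ v} = ⊤ ∧ v.prod = 1

/-- The reflection `s i = x^i * y` of the dihedral group `D_n`,
where `x = DihedralGroup.r 1` and `y = DihedralGroup.sr 0`. -/
def sD {n : ℕ} (i : ZMod n) : DihedralGroup n :=
  DihedralGroup.r i * DihedralGroup.sr 0

/-- Being a reflection in the dihedral group. -/
def IsReflection {n : ℕ} (g : DihedralGroup n) : Prop :=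
  ∃ i : ZMod n, g = DihedralGroup.sr i

namespace ReflPairAux

open DihedralGroup

lemma sD_eq {n : ℕ} (i : ZMod n) : sD i = sr (-i) := by
  simp [sD]

lemma sD_sq {n : ℕ} (i : ZMod n) : sD i * sD i = 1 := by
  simp [sD_eq]

lemma sD_inv {n : ℕ} (i : ZMod n) : (sD i)⁻¹ = sD i :=
  inv_eq_of_mul_eq_one_right (sD_sq i)

lemma sD_conj {n : ℕ} (i j : ZMod n) : sD i * sD j * (sD i)⁻¹ = sD (2 * i - j) := by
  rw [sD_inv]
  simp only [sD_eq, sr_mul_sr, r_mul_sr]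
  congr 1
  ring

lemma sD_conj' {n : ℕ} (i j : ZMod n) : (sD i)⁻¹ * sD j * sD i = sD (2 * i - j) := by
  have h := sD_conj i j
  rw [sD_inv] at h ⊢
  exact h

lemma braidStep_pair {G : Type*} [Group G] {a b : G} {w : List G}
    (h : BraidStep [a, b] w) : w = [a * b * a⁻¹, a] := by
  cases h with
  | head => rfl
  | tail _ h =>
    cases h with
    | tail _ h => cases h

lemma braidStep_pair' {G : Type*} [Group G] {c d : G} {v : List G}
    (h : BraidStep v [c, d]) : v = [d, d⁻¹ * c * d] := by
  cases h with
  | head a b t =>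
    simp [mul_assoc]
  | tail _ h =>
    cases h with
    | tail _ h => cases h

end ReflPairAux

open ReflPairAux in
/-- normalization of reflection pairs.  If the pair of reflections
`(s_{i₀}, s_{j₀})` generates a dihedral subgroup `D_m` with `m = n / gcd(n, j₀ - i₀)` and
`m ≥ 3`, then its Hurwitz orbit under the `B₂`-action consists exactly of the pairs
`(s_i, s_j)` with `i ≡ i₀ (mod n/m)` and `j - i = j₀ - i₀`. -/
theorem reflection_pair_orbit (n : ℕ) (hn : 3 ≤ n) (i₀ j₀ : ZMod n) (m : ℕ)
    (hm : m = n / Nat.gcd n ((j₀ - i₀).val)) (hm3 : 3 ≤ m) :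
    ∀ w : List (DihedralGroup n),
      HurwitzEquiv [sD i₀, sD j₀] w ↔
        ∃ i j : ZMod n, w = [sD i, sD j] ∧
          (∃ t : ZMod n, i = i₀ + t * ((n / m : ℕ) : ZMod n)) ∧
          j - i = j₀ - i₀ := by
  haveI : NeZero n := ⟨by omega⟩
  intro w
  set δ : ZMod n := j₀ - i₀ with hδ
  set g : ℕ := Nat.gcd n δ.val with hg
  have hg0 : 0 < g := Nat.gcd_pos_of_pos_left _ (by omega)
  have hgn : g ∣ n := Nat.gcd_dvd_left _ _
  have hnm : n / m = g := by
    rw [hm]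
    exact Nat.div_div_self hgn (by omega)
  set gc : ZMod n := ((n / m : ℕ) : ZMod n) with hgc
  have hgcg : gc = (g : ZMod n) := by rw [hgc, hnm]
  -- δ is a multiple of gc
  have hδg : ∃ d : ZMod n, δ = d * gc := by
    refine ⟨((δ.val / g : ℕ) : ZMod n), ?_⟩
    rw [hgcg]
    conv_lhs => rw [← ZMod.natCast_zmod_val δ]
    rw [← Nat.cast_mul, Nat.div_mul_cancel (Nat.gcd_dvd_right _ _)]
  -- gc is a multiple of δ (Bézout)
  have hgδ : ∃ c : ZMod n, gc = c * δ := by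
    refine ⟨((Nat.gcdB n δ.val : ℤ) : ZMod n), ?_⟩
    have hb := Nat.gcd_eq_gcd_ab n δ.val
    have := congrArg (fun z : ℤ => ((z : ℤ) : ZMod n)) hb
    simp only [Int.cast_add, Int.cast_mul, Int.cast_natCast, ZMod.natCast_self,
      zero_mul, zero_add, ZMod.natCast_zmod_val] at this
    rw [hgcg, this]
    ring
  obtain ⟨d, hd⟩ := hδg
  obtain ⟨c, hc⟩ := hgδ
  -- the invariant
  set P : List (DihedralGroup n) → Prop := fun v =>
    ∃ i j : ZMod n, v = [sD i, sD j] ∧ (∃ t : ZMod n, i = i₀ + t * gc) ∧ j - i = δ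
    with hP
  have key : ∀ v w : List (DihedralGroup n), BraidStep v w → (P v ↔ P w) := by
    intro v w h
    constructor
    · rintro ⟨i, j, rfl, ⟨t, hti⟩, hji⟩
      refine ⟨2 * i - j, i, ?_, ⟨t - d, ?_⟩, ?_⟩
      · rw [braidStep_pair h, sD_conj]
      · linear_combination hti - hji - hd
      · linear_combination hji
    · rintro ⟨i, j, hw, ⟨t, hti⟩, hji⟩
      subst hw
      refine ⟨j, 2 * j - i, ?_, ⟨t + d, ?_⟩, ?_⟩
      · rw [braidStep_pair' h, sD_conj']
      · linear_combination hti + hji + hd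
      · linear_combination hji
  constructor
  · intro hw
    have hiff : ∀ v w' : List (DihedralGroup n),
        Relation.EqvGen BraidStep v w' → (P v ↔ P w') := by
      intro v w' h
      induction h with
      | rel a b h => exact key a b h
      | refl a => exact Iff.rfl
      | symm a b _ ih => exact ih.symm
      | trans a b c _ _ ih1 ih2 => exact ih1.trans ih2
    exact (hiff _ _ hw).mp ⟨i₀, j₀, rfl, ⟨0, by ring⟩, rfl⟩
  · rintro ⟨i, j, rfl, ⟨t, hti⟩, hji⟩
    -- shifting by δ any number of times
    have shift : ∀ (k : ℕ) (a : ZMod n),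
        HurwitzEquiv [sD a, sD (a + δ)]
          [sD (a + (k : ZMod n) * δ), sD (a + (k : ZMod n) * δ + δ)] := by
      intro k
      induction k with
      | zero => intro a; simpa [HurwitzEquiv] using Relation.EqvGen.refl [sD a, sD (a + δ)]
      | succ k ih =>
        intro a
        have h1 := ih a
        set b : ZMod n := a + ((k : ℕ) + 1 : ℕ) * δ with hb
        have step : BraidStep [sD b, sD (b + δ)]
            [sD (a + (k : ZMod n) * δ), sD (a + (k : ZMod n) * δ + δ)] := by
          have := BraidStep.head (sD b) (sD (b + δ)) ([] : List (DihedralGroup n))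
          rw [sD_conj] at this
          have e1 : 2 * b - (b + δ) = a + (k : ZMod n) * δ := by
            rw [hb]; push_cast; ring
          have e2 : b = a + (k : ZMod n) * δ + δ := by
            rw [hb]; push_cast; ring
          rw [e1] at this
          nth_rewrite 3 [e2] at this
          exact this
        exact Relation.EqvGen.trans _ _ _ h1
          (Relation.EqvGen.symm _ _ (Relation.EqvGen.rel _ _ step))
    set k : ℕ := (t * c).val with hk
    have hkc : (k : ZMod n) = t * c := ZMod.natCast_zmod_val _
    have h0 := shift k i₀
    have e1 : i₀ + δ = j₀ := by rw [hδ]; ring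
    have e2 : i₀ + (k : ZMod n) * δ = i := by
      rw [hkc, hti, hc]; ring
    rw [e1, e2] at h0
    have e3 : i + δ = j := by linear_combination -hji
    rw [e3] at h0
    exact h0
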